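/- Let ρ and ρ' be positive semidefinite d×d matrices. Then ∫₀^∞ ‖χ_{≥√a}(ρ) − χ_{≥√a}(ρ')‖_F² da ≤ ‖ρ − ρ'‖_F · ‖ρ + ρ'‖_F. -/

import Mathlib

open Matrix ComplexOrder

/-- The Frobenius norm of a complex square matrix: `(Tr(AᴴA))^{1/2}`. -/
noncomputable def frobNorm {d : ℕ} (A : Matrix (Fin d) (Fin d) ℂ) : ℝ :=
  Real.sqrt ((Aᴴ * A).trace.re)

/-- The Schatten-1 (nuclear) norm: the sum of singular values, i.e. `Tr((AᴴA)^{1/2})`. -/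
noncomputable def nucNorm {d : ℕ} (A : Matrix (Fin d) (Fin d) ℂ) : ℝ :=
  ((((Matrix.posSemidef_conjTranspose_mul_self A).1.eigenvectorUnitary : Matrix (Fin d) (Fin d) ℂ) *
    Matrix.diagonal ((fun x : ℝ => (x : ℂ)) ∘ (Real.sqrt ·) ∘ (Matrix.posSemidef_conjTranspose_mul_self A).1.eigenvalues) *
    (star (Matrix.posSemidef_conjTranspose_mul_self A).1.eigenvectorUnitary : Matrix (Fin d) (Fin d) ℂ))).trace.re

/-- The spectral projection of a Hermitian matrix onto the direct sum of eigenspaces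
with eigenvalue at least `t`. -/
noncomputable def specProjGE {d : ℕ} {H : Matrix (Fin d) (Fin d) ℂ} (hH : H.IsHermitian)
    (t : ℝ) : Matrix (Fin d) (Fin d) ℂ :=
  (hH.eigenvectorUnitary : Matrix (Fin d) (Fin d) ℂ) *
    Matrix.diagonal (fun i => if t ≤ hH.eigenvalues i then (1 : ℂ) else 0) *
    (hH.eigenvectorUnitary : Matrix (Fin d) (Fin d) ℂ)ᴴ


lemma tr_general {d : ℕ} (U V : Matrix (Fin d) (Fin d) ℂ) (v w : Fin d → ℂ) :
    (U * Matrix.diagonal v * Uᴴ * (V * Matrix.diagonal w * Vᴴ)).trace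
      = ∑ i, ∑ j, v i * w j * Complex.normSq ((Uᴴ * V) i j) := by
  set W := Uᴴ * V with hW
  have h1 : U * Matrix.diagonal v * Uᴴ * (V * Matrix.diagonal w * Vᴴ)
      = (U * Matrix.diagonal v * W * Matrix.diagonal w) * Vᴴ := by
    simp only [hW, Matrix.mul_assoc]
  rw [h1, Matrix.trace_mul_comm]
  have h2 : Vᴴ * (U * Matrix.diagonal v * W * Matrix.diagonal w)
      = Wᴴ * (Matrix.diagonal v * W) * Matrix.diagonal w := by
    simp only [hW, Matrix.conjTranspose_mul, Matrix.conjTranspose_conjTranspose,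
      Matrix.mul_assoc]
  rw [h2, Matrix.trace]
  have h3 : ∀ j, (Wᴴ * (Matrix.diagonal v * W) * Matrix.diagonal w).diag j
      = ∑ i, v i * w j * Complex.normSq (W i j) := by
    intro j
    rw [Matrix.diag_apply, Matrix.mul_diagonal, Matrix.mul_apply, Finset.sum_mul]
    refine Finset.sum_congr rfl fun i _ => ?_
    rw [Matrix.diagonal_mul, Matrix.conjTranspose_apply]
    have : (W i j) * star (W i j) = (Complex.normSq (W i j) : ℂ) := Complex.mul_conj _
    calc star (W i j) * (v i * W i j) * w j
        = v i * w j * (W i j * star (W i j)) := by ring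
      _ = v i * w j * Complex.normSq (W i j) := by rw [this]
  rw [Finset.sum_congr rfl fun j _ => h3 j, Finset.sum_comm]

lemma herm_UDU {d : ℕ} (U : Matrix (Fin d) (Fin d) ℂ) (f : Fin d → ℝ) :
    (U * Matrix.diagonal (fun i => (f i : ℂ)) * Uᴴ)ᴴ
      = U * Matrix.diagonal (fun i => (f i : ℂ)) * Uᴴ := by
  have : star (fun i => (f i : ℂ)) = fun i => (f i : ℂ) := by
    funext i; simp [Complex.conj_ofReal]
  simp [Matrix.conjTranspose_mul, Matrix.diagonal_conjTranspose, this, Matrix.mul_assoc]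

lemma trace_re {d : ℕ} (U V : Matrix (Fin d) (Fin d) ℂ) (f g : Fin d → ℝ) :
    ((U * Matrix.diagonal (fun i => (f i : ℂ)) * Uᴴ *
        (V * Matrix.diagonal (fun i => (g i : ℂ)) * Vᴴ)).trace).re
      = ∑ i, ∑ j, f i * g j * Complex.normSq ((Uᴴ * V) i j) := by
  rw [tr_general]
  rw [Complex.re_sum]
  refine Finset.sum_congr rfl fun i _ => ?_
  rw [Complex.re_sum]
  refine Finset.sum_congr rfl fun j _ => ?_
  rw [← Complex.ofReal_mul, ← Complex.ofReal_mul, Complex.ofReal_re]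

lemma row_sum_one {d : ℕ} {U V : Matrix (Fin d) (Fin d) ℂ}
    (hU : U ∈ Matrix.unitaryGroup (Fin d) ℂ) (hV : V ∈ Matrix.unitaryGroup (Fin d) ℂ) (i : Fin d) :
    ∑ j, Complex.normSq ((Uᴴ * V) i j) = 1 := by
  have hV2 : V * Vᴴ = 1 := by
    rw [← Matrix.star_eq_conjTranspose]; exact (Unitary.mem_iff.mp hV).2
  have hU1 : Uᴴ * U = 1 := by
    rw [← Matrix.star_eq_conjTranspose]; exact (Unitary.mem_iff.mp hU).1
  have hWW : (Uᴴ * V) * (Uᴴ * V)ᴴ = 1 := by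
    rw [Matrix.conjTranspose_mul, Matrix.conjTranspose_conjTranspose]
    calc Uᴴ * V * (Vᴴ * U) = Uᴴ * (V * Vᴴ) * U := by simp only [Matrix.mul_assoc]
      _ = 1 := by rw [hV2, Matrix.mul_one, hU1]
  have h1 : ((Uᴴ * V) * (Uᴴ * V)ᴴ) i i = 1 := by rw [hWW]; simp [Matrix.one_apply]
  have h2 : ((Uᴴ * V) * (Uᴴ * V)ᴴ) i i = ∑ j, (Complex.normSq ((Uᴴ * V) i j) : ℂ) := by
    rw [Matrix.mul_apply]
    exact Finset.sum_congr rfl fun j _ => by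
      rw [Matrix.conjTranspose_apply, Complex.star_def, Complex.mul_conj]
  have := h1.symm.trans h2
  have hre := congrArg Complex.re this
  rw [Complex.re_sum] at hre
  simpa using hre.symm

lemma col_sum_one {d : ℕ} {U V : Matrix (Fin d) (Fin d) ℂ}
    (hU : U ∈ Matrix.unitaryGroup (Fin d) ℂ) (hV : V ∈ Matrix.unitaryGroup (Fin d) ℂ) (j : Fin d) :
    ∑ i, Complex.normSq ((Uᴴ * V) i j) = 1 := by
  have h := row_sum_one hV hU j
  rw [← h]
  refine Finset.sum_congr rfl fun i _ => ?_
  have : (Vᴴ * U) j i = star ((Uᴴ * V) i j) := by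
    rw [← Matrix.conjTranspose_apply, Matrix.conjTranspose_mul,
      Matrix.conjTranspose_conjTranspose]
  rw [this, Complex.star_def, Complex.normSq_conj]

lemma frob_sq_eq {d : ℕ} {U V : Matrix (Fin d) (Fin d) ℂ}
    (hU : U ∈ Matrix.unitaryGroup (Fin d) ℂ) (hV : V ∈ Matrix.unitaryGroup (Fin d) ℂ)
    (f g : Fin d → ℝ) :
    (((U * Matrix.diagonal (fun i => (f i : ℂ)) * Uᴴ
        - V * Matrix.diagonal (fun i => (g i : ℂ)) * Vᴴ)ᴴ *
      (U * Matrix.diagonal (fun i => (f i : ℂ)) * Uᴴ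
        - V * Matrix.diagonal (fun i => (g i : ℂ)) * Vᴴ)).trace).re
      = ∑ i, ∑ j, Complex.normSq ((Uᴴ * V) i j) * (f i - g j)^2 := by
  set A := U * Matrix.diagonal (fun i => (f i : ℂ)) * Uᴴ with hA
  set B := V * Matrix.diagonal (fun i => (g i : ℂ)) * Vᴴ with hB
  set c : Fin d → Fin d → ℝ := fun i j => Complex.normSq ((Uᴴ * V) i j) with hc
  have hU1 : Uᴴ * U = 1 := by
    rw [← Matrix.star_eq_conjTranspose]; exact (Unitary.mem_iff.mp hU).1
  have hV1 : Vᴴ * V = 1 := by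
    rw [← Matrix.star_eq_conjTranspose]; exact (Unitary.mem_iff.mp hV).1
  have hsub : (A - B)ᴴ = A - B := by
    rw [Matrix.conjTranspose_sub, hA, hB, herm_UDU, herm_UDU]
  have hexp : (A - B)ᴴ * (A - B) = A * A - A * B - (B * A - B * B) := by
    rw [hsub]; noncomm_ring
  rw [hexp, Matrix.trace_sub, Matrix.trace_sub, Matrix.trace_sub, Complex.sub_re,
    Complex.sub_re, Complex.sub_re]
  have hAA : ((A * A).trace).re = ∑ i, f i ^ 2 := by
    rw [hA, trace_re U U f f, ]
    have : ∀ i j : Fin d, Complex.normSq ((Uᴴ * U) i j) = if i = j then 1 else 0 := by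
      intro i j; rw [hU1, Matrix.one_apply]
      split <;> simp
    simp only [this]
    simp [Finset.sum_ite_eq', mul_ite, mul_one, mul_zero, sq]
  have hBB : ((B * B).trace).re = ∑ j, g j ^ 2 := by
    rw [hB, trace_re V V g g]
    have : ∀ i j : Fin d, Complex.normSq ((Vᴴ * V) i j) = if i = j then 1 else 0 := by
      intro i j; rw [hV1, Matrix.one_apply]
      split <;> simp
    simp only [this]
    simp [Finset.sum_ite_eq', mul_ite, mul_one, mul_zero, sq]
  have hAB : ((A * B).trace).re = ∑ i, ∑ j, f i * g j * c i j := trace_re U V f g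
  have hBA : ((B * A).trace).re = ∑ i, ∑ j, f i * g j * c i j := by
    rw [hB, hA, trace_re V U g f, Finset.sum_comm]
    refine Finset.sum_congr rfl fun i _ => Finset.sum_congr rfl fun j _ => ?_
    have : (Vᴴ * U) j i = star ((Uᴴ * V) i j) := by
      rw [← Matrix.conjTranspose_apply, Matrix.conjTranspose_mul,
        Matrix.conjTranspose_conjTranspose]
    rw [this, Complex.star_def, Complex.normSq_conj, hc]
    ring
  rw [hAA, hBB, hAB, hBA]
  have hrow := fun i => row_sum_one hU hV i
  have hcol := fun j => col_sum_one hU hV j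
  have hexpand : ∀ i j : Fin d, c i j * (f i - g j)^2
      = f i ^ 2 * c i j + g j ^ 2 * c i j - 2 * (f i * g j * c i j) := fun i j => by ring
  calc ∑ i, f i ^ 2 - ∑ i, ∑ j, f i * g j * c i j
        - (∑ i, ∑ j, f i * g j * c i j - ∑ j, g j ^ 2)
      = (∑ i, f i ^ 2) + (∑ j, g j ^ 2) - 2 * (∑ i, ∑ j, f i * g j * c i j) := by ring
    _ = (∑ i, ∑ j, f i ^ 2 * c i j) + (∑ i, ∑ j, g j ^ 2 * c i j)
        - 2 * (∑ i, ∑ j, f i * g j * c i j) := by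
      congr 2
      · refine Finset.sum_congr rfl fun i _ => ?_
        rw [← Finset.mul_sum, hrow i, mul_one]
      · rw [Finset.sum_comm]
        refine Finset.sum_congr rfl fun j _ => ?_
        rw [← Finset.mul_sum, hcol j, mul_one]
    _ = ∑ i, ∑ j, c i j * (f i - g j)^2 := by
      simp only [hexpand, Finset.sum_sub_distrib, Finset.sum_add_distrib, Finset.mul_sum]

open MeasureTheory in
lemma scalar_fun_eq {lam mu : ℝ} (hm : 0 ≤ mu) (hml : mu ≤ lam) :
    Set.EqOn (fun a => ((if Real.sqrt a ≤ lam then (1:ℝ) else 0)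
        - (if Real.sqrt a ≤ mu then 1 else 0))^2)
      (Set.indicator (Set.Ioc (mu^2) (lam^2)) (fun _ => (1:ℝ))) (Set.Ioi 0) := by
  intro a ha
  have hl : 0 ≤ lam := hm.trans hml
  have hiff : ∀ t : ℝ, 0 ≤ t → (Real.sqrt a ≤ t ↔ a ≤ t^2) := by
    intro t ht
    constructor
    · intro h
      calc a = Real.sqrt a ^ 2 := (Real.sq_sqrt ha.le).symm
        _ ≤ t ^ 2 := by nlinarith [Real.sqrt_nonneg a]
    · intro h
      calc Real.sqrt a ≤ Real.sqrt (t^2) := Real.sqrt_le_sqrt h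
        _ = t := Real.sqrt_sq ht
  simp only [hiff lam hl, hiff mu hm, Set.indicator_apply, Set.mem_Ioc]
  by_cases h2 : a ≤ mu^2
  · have h1 : a ≤ lam^2 := h2.trans (by nlinarith)
    simp [h1, h2, not_lt.mpr h2]
  · by_cases h1 : a ≤ lam^2
    · simp [h1, h2, not_le.mp h2]
    · simp [h1, h2, fun (h : mu^2 < a ∧ a ≤ lam^2) => h1 h.2]

open MeasureTheory in
lemma scalar_integrable {lam mu : ℝ} (hl : 0 ≤ lam) (hm : 0 ≤ mu) :
    IntegrableOn (fun a => ((if Real.sqrt a ≤ lam then (1:ℝ) else 0)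
        - (if Real.sqrt a ≤ mu then 1 else 0))^2) (Set.Ioi 0) := by
  rcases le_total mu lam with h | h
  · refine IntegrableOn.congr_fun ?_ (scalar_fun_eq hm h).symm measurableSet_Ioi
    exact ((integrable_indicator_iff measurableSet_Ioc).mpr
      (integrableOn_const measure_Ioc_lt_top.ne)).integrableOn
  · have : (fun a => ((if Real.sqrt a ≤ lam then (1:ℝ) else 0)
        - (if Real.sqrt a ≤ mu then 1 else 0))^2)
        = fun a => ((if Real.sqrt a ≤ mu then (1:ℝ) else 0)
        - (if Real.sqrt a ≤ lam then 1 else 0))^2 := by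
      funext a; ring
    rw [this]
    refine IntegrableOn.congr_fun ?_ (scalar_fun_eq hl h).symm measurableSet_Ioi
    exact ((integrable_indicator_iff measurableSet_Ioc).mpr
      (integrableOn_const measure_Ioc_lt_top.ne)).integrableOn

open MeasureTheory in
lemma scalar_integral_le {lam mu : ℝ} (hm : 0 ≤ mu) (hml : mu ≤ lam) :
    ∫ a in Set.Ioi (0:ℝ), ((if Real.sqrt a ≤ lam then (1:ℝ) else 0)
        - (if Real.sqrt a ≤ mu then 1 else 0))^2 = lam^2 - mu^2 := by
  rw [setIntegral_congr_fun measurableSet_Ioi (scalar_fun_eq hm hml),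
    setIntegral_indicator measurableSet_Ioc]
  have hsub : Set.Ioc (mu^2) (lam^2) ⊆ Set.Ioi 0 := fun x hx =>
    lt_of_le_of_lt (by positivity) hx.1
  rw [Set.inter_eq_self_of_subset_right hsub]
  have h2 : mu^2 ≤ lam^2 := by nlinarith
  simp [Real.volume_Ioc, ENNReal.toReal_ofReal (by linarith : (0:ℝ) ≤ lam^2 - mu^2)]
  exact h2

open MeasureTheory in
lemma scalar_integral {lam mu : ℝ} (hl : 0 ≤ lam) (hm : 0 ≤ mu) :
    ∫ a in Set.Ioi (0:ℝ), ((if Real.sqrt a ≤ lam then (1:ℝ) else 0)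
        - (if Real.sqrt a ≤ mu then 1 else 0))^2 = |lam - mu| * (lam + mu) := by
  rcases le_total mu lam with h | h
  · rw [scalar_integral_le hm h, abs_of_nonneg (by linarith)]; ring
  · have heq : (fun a => ((if Real.sqrt a ≤ lam then (1:ℝ) else 0)
        - (if Real.sqrt a ≤ mu then 1 else 0))^2)
        = fun a => ((if Real.sqrt a ≤ mu then (1:ℝ) else 0)
        - (if Real.sqrt a ≤ lam then 1 else 0))^2 := by
      funext a; ring
    rw [heq, scalar_integral_le hl h, abs_of_nonpos (by linarith)]; ring

open MeasureTheory in
/-- Connes' lemma: for positive semidefinite `ρ, ρ'`,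
`∫₀^∞ ‖χ_{≥√a}(ρ) − χ_{≥√a}(ρ')‖_F² da ≤ ‖ρ − ρ'‖_F ‖ρ + ρ'‖_F`. -/
theorem connes_joint_continuity {d : ℕ} (ρ ρ' : Matrix (Fin d) (Fin d) ℂ)
    (hρ : ρ.PosSemidef) (hρ' : ρ'.PosSemidef) :
    (∫ a in Set.Ioi (0 : ℝ),
        frobNorm (specProjGE hρ.1 (Real.sqrt a) - specProjGE hρ'.1 (Real.sqrt a)) ^ 2)
      ≤ frobNorm (ρ - ρ') * frobNorm (ρ + ρ') := by
  set U : Matrix (Fin d) (Fin d) ℂ := (hρ.1.eigenvectorUnitary : Matrix (Fin d) (Fin d) ℂ)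
    with hUdef
  set V : Matrix (Fin d) (Fin d) ℂ := (hρ'.1.eigenvectorUnitary : Matrix (Fin d) (Fin d) ℂ)
    with hVdef
  set lam : Fin d → ℝ := hρ.1.eigenvalues with hlamdef
  set mu : Fin d → ℝ := hρ'.1.eigenvalues with hmudef
  have hU : U ∈ Matrix.unitaryGroup (Fin d) ℂ := (hρ.1.eigenvectorUnitary).2
  have hV : V ∈ Matrix.unitaryGroup (Fin d) ℂ := (hρ'.1.eigenvectorUnitary).2
  have hlam : ∀ i, 0 ≤ lam i := fun i => hρ.eigenvalues_nonneg i
  have hmu : ∀ i, 0 ≤ mu i := fun i => hρ'.eigenvalues_nonneg i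
  set c : Fin d → Fin d → ℝ := fun i j => Complex.normSq ((Uᴴ * V) i j) with hcdef
  have hc : ∀ i j, 0 ≤ c i j := fun i j => Complex.normSq_nonneg _
  -- spectral decompositions
  have hρeq : ρ = U * Matrix.diagonal (fun i => (lam i : ℂ)) * Uᴴ := by
    have := hρ.1.spectral_theorem
    rw [Unitary.conjStarAlgAut_apply, Matrix.star_eq_conjTranspose] at this
    exact this
  have hρ'eq : ρ' = V * Matrix.diagonal (fun i => (mu i : ℂ)) * Vᴴ := by
    have := hρ'.1.spectral_theorem
    rw [Unitary.conjStarAlgAut_apply, Matrix.star_eq_conjTranspose] at this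
    exact this
  -- spectral projections in the standard form
  have hproj : ∀ t : ℝ, specProjGE hρ.1 t
      = U * Matrix.diagonal (fun i => ((if t ≤ lam i then (1:ℝ) else 0 : ℝ) : ℂ)) * Uᴴ := by
    intro t
    unfold specProjGE
    rw [show (fun i => if t ≤ hρ.1.eigenvalues i then (1:ℂ) else 0)
        = (fun i => ((if t ≤ lam i then (1:ℝ) else 0 : ℝ) : ℂ)) from by
      funext i; split <;> simp]
  have hproj' : ∀ t : ℝ, specProjGE hρ'.1 t
      = V * Matrix.diagonal (fun i => ((if t ≤ mu i then (1:ℝ) else 0 : ℝ) : ℂ)) * Vᴴ := by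
    intro t
    unfold specProjGE
    rw [show (fun i => if t ≤ hρ'.1.eigenvalues i then (1:ℂ) else 0)
        = (fun i => ((if t ≤ mu i then (1:ℝ) else 0 : ℝ) : ℂ)) from by
      funext i; split <;> simp]
  -- key squared-Frobenius formula
  have key : ∀ f g : Fin d → ℝ,
      frobNorm (U * Matrix.diagonal (fun i => (f i : ℂ)) * Uᴴ
        - V * Matrix.diagonal (fun i => (g i : ℂ)) * Vᴴ) ^ 2
      = ∑ p : Fin d × Fin d, c p.1 p.2 * (f p.1 - g p.2)^2 := by
    intro f g
    rw [Fintype.sum_prod_type]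
    rw [frobNorm, Real.sq_sqrt (by
      rw [frob_sq_eq hU hV f g]
      exact Finset.sum_nonneg fun i _ => Finset.sum_nonneg fun j _ =>
        mul_nonneg (Complex.normSq_nonneg _) (sq_nonneg _))]
    exact frob_sq_eq hU hV f g
  -- integrand identity
  have hint : ∀ a : ℝ,
      frobNorm (specProjGE hρ.1 (Real.sqrt a) - specProjGE hρ'.1 (Real.sqrt a)) ^ 2
      = ∑ p : Fin d × Fin d, c p.1 p.2 *
          ((if Real.sqrt a ≤ lam p.1 then (1:ℝ) else 0)
            - (if Real.sqrt a ≤ mu p.2 then 1 else 0))^2 := by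
    intro a
    rw [hproj, hproj', key]
  -- compute the integral
  have hLHS : (∫ a in Set.Ioi (0 : ℝ),
        frobNorm (specProjGE hρ.1 (Real.sqrt a) - specProjGE hρ'.1 (Real.sqrt a)) ^ 2)
      = ∑ p : Fin d × Fin d, c p.1 p.2 * (|lam p.1 - mu p.2| * (lam p.1 + mu p.2)) := by
    simp only [hint]
    rw [integral_finset_sum Finset.univ (fun p _ =>
      ((scalar_integrable (hlam p.1) (hmu p.2)).const_mul (c p.1 p.2)))]
    refine Finset.sum_congr rfl fun p _ => ?_
    rw [MeasureTheory.integral_const_mul, scalar_integral (hlam p.1) (hmu p.2)]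
  rw [hLHS]
  -- the two Frobenius norms on the RHS
  have hS1 : frobNorm (ρ - ρ') ^ 2 = ∑ p : Fin d × Fin d, c p.1 p.2 * (lam p.1 - mu p.2)^2 := by
    rw [hρeq, hρ'eq, key]
  have hS2 : frobNorm (ρ + ρ') ^ 2 = ∑ p : Fin d × Fin d, c p.1 p.2 * (lam p.1 + mu p.2)^2 := by
    have hneg : V * Matrix.diagonal (fun i => ((-mu i : ℝ) : ℂ)) * Vᴴ
        = -(V * Matrix.diagonal (fun i => (mu i : ℂ)) * Vᴴ) := by
      have : Matrix.diagonal (fun i => ((-mu i : ℝ) : ℂ))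
          = -(Matrix.diagonal (fun i => (mu i : ℂ))) := by
        ext i j
        by_cases h : i = j <;>
          simp [Matrix.diagonal_apply, Matrix.neg_apply, h]
      rw [this, Matrix.mul_neg, Matrix.neg_mul]
    have := key lam (fun i => -mu i)
    rw [hneg, sub_neg_eq_add, ← hρeq, ← hρ'eq] at this
    rw [this]
    refine Finset.sum_congr rfl fun p _ => by ring
  have hnn1 : 0 ≤ frobNorm (ρ - ρ') := Real.sqrt_nonneg _
  have hnn2 : 0 ≤ frobNorm (ρ + ρ') := Real.sqrt_nonneg _
  have hfrob1 : frobNorm (ρ - ρ')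
      = Real.sqrt (∑ p : Fin d × Fin d, c p.1 p.2 * (lam p.1 - mu p.2)^2) := by
    rw [← hS1, Real.sqrt_sq hnn1]
  have hfrob2 : frobNorm (ρ + ρ')
      = Real.sqrt (∑ p : Fin d × Fin d, c p.1 p.2 * (lam p.1 + mu p.2)^2) := by
    rw [← hS2, Real.sqrt_sq hnn2]
  rw [hfrob1, hfrob2]
  -- Cauchy–Schwarz
  have hCS := Real.sum_mul_le_sqrt_mul_sqrt (Finset.univ : Finset (Fin d × Fin d))
    (fun p => Real.sqrt (c p.1 p.2) * |lam p.1 - mu p.2|)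
    (fun p => Real.sqrt (c p.1 p.2) * (lam p.1 + mu p.2))
  calc ∑ p : Fin d × Fin d, c p.1 p.2 * (|lam p.1 - mu p.2| * (lam p.1 + mu p.2))
      = ∑ p : Fin d × Fin d, (Real.sqrt (c p.1 p.2) * |lam p.1 - mu p.2|)
          * (Real.sqrt (c p.1 p.2) * (lam p.1 + mu p.2)) := by
        refine Finset.sum_congr rfl fun p _ => ?_
        rw [show (Real.sqrt (c p.1 p.2) * |lam p.1 - mu p.2|)
            * (Real.sqrt (c p.1 p.2) * (lam p.1 + mu p.2))
            = (Real.sqrt (c p.1 p.2) * Real.sqrt (c p.1 p.2))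
              * (|lam p.1 - mu p.2| * (lam p.1 + mu p.2)) from by ring,
          Real.mul_self_sqrt (hc p.1 p.2)]
    _ ≤ Real.sqrt (∑ p : Fin d × Fin d, (Real.sqrt (c p.1 p.2) * |lam p.1 - mu p.2|)^2)
        * Real.sqrt (∑ p : Fin d × Fin d, (Real.sqrt (c p.1 p.2) * (lam p.1 + mu p.2))^2) := hCS
    _ = Real.sqrt (∑ p : Fin d × Fin d, c p.1 p.2 * (lam p.1 - mu p.2)^2)
        * Real.sqrt (∑ p : Fin d × Fin d, c p.1 p.2 * (lam p.1 + mu p.2)^2) := by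
        congr 2 <;> refine Finset.sum_congr rfl fun p _ => ?_ <;>
          rw [mul_pow, Real.sq_sqrt (hc p.1 p.2)] <;> rw [sq_abs]
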